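/- For every k >= 4 and every n divisible by 2k-3, the blow-up of J_{k-1} on n vertices with the universal vertex blown up to a class of size ((k-2)/(2k-3))n and each of the other k-1 vertices blown up to classes of size n/(2k-3) contains no K_4^3, no F_{3,2}, and no J_k, and has minimum positive co-degree exactly ((k-2)/(2k-3))n. -/

import Mathlib

lemma pair_card_le {α : Type*} [DecidableEq α] (a b : α) :
    ({a, b} : Finset α).card ≤ 2 := (Finset.card_insert_le _ _).trans (by simp)

lemma card3_ne {α : Type*} [DecidableEq α] {a b d : α}
    (h : ({a, b, d} : Finset α).card = 3) : a ≠ b ∧ a ≠ d ∧ b ≠ d := by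
  refine ⟨fun he => ?_, fun he => ?_, fun he => ?_⟩
  · subst he; simp_all; have h2 := pair_card_le a d; omega
  · subst he; simp_all; have h2 := pair_card_le b a; omega
  · subst he; simp_all; have h2 := pair_card_le a b; omega

lemma card3_of_ne {α : Type*} [DecidableEq α] {a b d : α}
    (h1 : a ≠ b) (h2 : a ≠ d) (h3 : b ≠ d) : ({a, b, d} : Finset α).card = 3 := by
  rw [Finset.card_insert_of_notMem (by simp [h1, h2]),
    Finset.card_insert_of_notMem (by simp [h3]), Finset.card_singleton]

lemma k4_prop {P Q S T : Prop} (npq : ¬(P ∧ Q)) (nps : ¬(P ∧ S)) (nqs : ¬(Q ∧ S))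
    (npt : ¬(P ∧ T)) (nqt : ¬(Q ∧ T)) (nst : ¬(S ∧ T))
    (Z1 : P ∨ Q ∨ S) (Z2 : P ∨ Q ∨ T) (Z3 : P ∨ S ∨ T) (Z4 : Q ∨ S ∨ T) : False := by
  rcases Z1 with hp | hq | hs
  · rcases Z4 with h | h | h
    exacts [npq ⟨hp, h⟩, nps ⟨hp, h⟩, npt ⟨hp, h⟩]
  · rcases Z3 with h | h | h
    exacts [npq ⟨h, hq⟩, nqs ⟨hq, h⟩, nqt ⟨hq, h⟩]
  · rcases Z2 with h | h | h
    exacts [nps ⟨h, hs⟩, nqs ⟨h, hs⟩, nst ⟨hs, h⟩]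

lemma f32_prop {P Q S T U : Prop} (nps : ¬(P ∧ S)) (nqs : ¬(Q ∧ S))
    (npt : ¬(P ∧ T)) (nqt : ¬(Q ∧ T)) (npu : ¬(P ∧ U)) (nqu : ¬(Q ∧ U))
    (nst : ¬(S ∧ T)) (nsu : ¬(S ∧ U)) (ntu : ¬(T ∧ U))
    (Z1 : P ∨ Q ∨ S) (Z2 : P ∨ Q ∨ T) (Z3 : P ∨ Q ∨ U) (Z4 : S ∨ T ∨ U) : False := by
  rcases Z4 with hs | ht | hu
  · rcases Z2 with h | h | h
    exacts [nps ⟨h, hs⟩, nqs ⟨h, hs⟩, nst ⟨hs, h⟩]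
  · rcases Z3 with h | h | h
    exacts [npt ⟨h, ht⟩, nqt ⟨h, ht⟩, ntu ⟨ht, h⟩]
  · rcases Z2 with h | h | h
    exacts [npu ⟨h, hu⟩, nqu ⟨h, hu⟩, ntu ⟨h, hu⟩]

lemma class_card_sub {k m n : ℕ} (hk : 4 ≤ k) (hn : n = (2 * k - 3) * m)
    {c : Fin n → Fin k}
    (hsize : ∀ i : Fin k, (Finset.univ.filter (fun v => c v = i)).card =
      if (i : ℕ) = 0 then (k - 2) * m else m)
    (w : Fin k) (hw : (w : ℕ) ≠ 0) :
    (Finset.univ.filter (fun z => c z ≠ (⟨0, Nat.lt_of_lt_of_le (by decide) hk⟩ : Fin k) ∧ c z ≠ w)).card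
      = (k - 2) * m := by
  set zero : Fin k := ⟨0, Nat.lt_of_lt_of_le (by decide) hk⟩ with hzero
  have h1 : (Finset.univ.filter (fun z => c z = zero)).card = (k - 2) * m := by
    have := hsize zero; simpa [hzero] using this
  have h2 : (Finset.univ.filter (fun z => c z = w)).card = m := by
    have := hsize w; rwa [if_neg hw] at this
  have hdis : Disjoint (Finset.univ.filter (fun z => c z = zero))
      (Finset.univ.filter (fun z => c z = w)) := by
    rw [Finset.disjoint_left]
    intro a ha hb
    simp only [Finset.mem_filter] at ha hb
    exact hw (by rw [← hb.2, ha.2, hzero])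
  have hunion : (Finset.univ.filter (fun z => c z = zero ∨ c z = w)).card
      = (k - 2) * m + m := by
    rw [Finset.filter_or, Finset.card_union_of_disjoint hdis, h1, h2]
  have heq : (Finset.univ.filter (fun z => c z ≠ zero ∧ c z ≠ w)) =
      (Finset.univ.filter (fun z => ¬(c z = zero ∨ c z = w))) := by
    apply Finset.filter_congr; intro z _; simp [not_or]
  rw [heq, Finset.filter_not, Finset.card_sdiff_of_subset (Finset.filter_subset _ _),
    Finset.card_univ, Fintype.card_fin, hunion, hn]
  obtain ⟨j, rfl⟩ : ∃ j, k = j + 4 := ⟨k - 4, by omega⟩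
  simp only [show 2 * (j + 4) - 3 = 2 * j + 5 from by omega,
    show j + 4 - 2 = j + 2 from by omega]
  have : (2 * j + 5) * m = ((j + 2) * m + m) + (j + 2) * m := by ring
  rw [this, Nat.add_sub_cancel_left]

lemma codeg_key {k m n : ℕ} (hk : 4 ≤ k) (hm : 1 ≤ m) (hn : n = (2 * k - 3) * m)
    {c : Fin n → Fin k}
    (hsize : ∀ i : Fin k, (Finset.univ.filter (fun v => c v = i)).card =
      if (i : ℕ) = 0 then (k - 2) * m else m)
    {H : Finset (Finset (Fin n))}
    (hH : H = Finset.univ.filter (fun e : Finset (Fin n) =>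
      e.card = 3 ∧ (e.image c).card = 3 ∧ (⟨0, Nat.lt_of_lt_of_le (by decide) hk⟩ : Fin k) ∈ e.image c))
    (x y : Fin n) (hcxy : c x ≠ c y) :
    (H.filter (fun e => x ∈ e ∧ y ∈ e)).card = (k - 2) * m := by
  classical
  subst hH
  set zero : Fin k := ⟨0, Nat.lt_of_lt_of_le (by decide) hk⟩ with hzero
  have hxy : x ≠ y := fun h => hcxy (by rw [h])
  set Z : Finset (Fin n) := Finset.univ.filter
    (fun z => c z ≠ c x ∧ c z ≠ c y ∧ (c x = zero ∨ c y = zero ∨ c z = zero))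
    with hZdef
  have hcards : Z.card = (Finset.filter (fun e => x ∈ e ∧ y ∈ e)
      (Finset.univ.filter (fun e : Finset (Fin n) =>
        e.card = 3 ∧ (e.image c).card = 3 ∧ zero ∈ e.image c))).card := by
    apply Finset.card_bij (fun z _ => ({x, y, z} : Finset (Fin n)))
    · intro z hz
      simp only [hZdef, Finset.mem_filter, Finset.mem_univ, true_and] at hz
      obtain ⟨hzx, hzy, hor⟩ := hz
      simp only [Finset.mem_filter, Finset.mem_univ, true_and]
      have hzx' : z ≠ x := fun h => hzx (by rw [h])
      have hzy' : z ≠ y := fun h => hzy (by rw [h])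
      refine ⟨⟨card3_of_ne hxy hzx'.symm hzy'.symm, ?_, ?_⟩, by simp, by simp⟩
      · simp only [Finset.image_insert, Finset.image_singleton]
        exact card3_of_ne hcxy (Ne.symm hzx) (Ne.symm hzy)
      · simp only [Finset.image_insert, Finset.image_singleton,
          Finset.mem_insert, Finset.mem_singleton]
        rcases hor with h | h | h
        · exact Or.inl h.symm
        · exact Or.inr (Or.inl h.symm)
        · exact Or.inr (Or.inr h.symm)
    · intro z1 h1 z2 h2 heq
      simp only [hZdef, Finset.mem_filter, Finset.mem_univ, true_and] at h1 h2
      have hz1 : z1 ∈ ({x, y, z2} : Finset (Fin n)) := heq ▸ (by simp)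
      simp only [Finset.mem_insert, Finset.mem_singleton] at hz1
      rcases hz1 with h | h | h
      · exact absurd (by rw [h]) h1.1
      · exact absurd (by rw [h]) h1.2.1
      · exact h
    · intro e he
      simp only [Finset.mem_filter, Finset.mem_univ, true_and] at he
      obtain ⟨⟨hc3, hi3, hmem⟩, hxe, hye⟩ := he
      have hsub : ({x, y} : Finset (Fin n)) ⊆ e := by
        intro t ht; simp only [Finset.mem_insert, Finset.mem_singleton] at ht
        rcases ht with rfl | rfl <;> assumption
      have hcd : (e \ {x, y}).card = 1 := by
        rw [Finset.card_sdiff_of_subset hsub, hc3, Finset.card_pair hxy]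
      obtain ⟨z, hz⟩ := Finset.card_eq_one.mp hcd
      have hze : z ∈ e \ ({x, y} : Finset (Fin n)) := hz ▸ Finset.mem_singleton_self z
      simp only [Finset.mem_sdiff, Finset.mem_insert, Finset.mem_singleton,
        not_or] at hze
      obtain ⟨hzein, hzx, hzy⟩ := hze
      have heq : ({x, y, z} : Finset (Fin n)) = e := by
        apply Finset.eq_of_subset_of_card_le
        · intro t ht; simp only [Finset.mem_insert, Finset.mem_singleton] at ht
          rcases ht with rfl | rfl | rfl <;> assumption
        · rw [hc3, card3_of_ne hxy (Ne.symm hzx) (Ne.symm hzy)]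
      refine ⟨z, ?_, heq⟩
      rw [← heq] at hi3 hmem
      simp only [Finset.image_insert, Finset.image_singleton] at hi3 hmem
      obtain ⟨hne1, hne2, hne3⟩ := card3_ne hi3
      simp only [Finset.mem_insert, Finset.mem_singleton] at hmem
      simp only [hZdef, Finset.mem_filter, Finset.mem_univ, true_and]
      refine ⟨Ne.symm hne2, Ne.symm hne3, ?_⟩
      rcases hmem with h | h | h
      · exact Or.inl h.symm
      · exact Or.inr (Or.inl h.symm)
      · exact Or.inr (Or.inr h.symm)
  rw [← hcards]
  by_cases hx0 : c x = zero
  · have hy0 : (c y : ℕ) ≠ 0 := fun h => hcxy (by rw [hx0]; exact Fin.ext (by simp [h, hzero]))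
    have : Z = Finset.univ.filter (fun z => c z ≠ zero ∧ c z ≠ c y) := by
      rw [hZdef]; apply Finset.filter_congr; intro z _
      simp only [hx0]; tauto
    rw [this]
    exact class_card_sub hk hn hsize (c y) hy0
  · by_cases hy0 : c y = zero
    · have hx0' : (c x : ℕ) ≠ 0 := fun h => hx0 (Fin.ext (by simp [h, hzero]))
      have : Z = Finset.univ.filter (fun z => c z ≠ zero ∧ c z ≠ c x) := by
        rw [hZdef]; apply Finset.filter_congr; intro z _
        simp only [hy0]
        constructor
        · rintro ⟨h1, h2, _⟩; exact ⟨h2, h1⟩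
        · rintro ⟨h1, h2⟩; exact ⟨h2, h1, Or.inr (Or.inl trivial)⟩
      rw [this]
      exact class_card_sub hk hn hsize (c x) hx0'
    · have : Z = Finset.univ.filter (fun z => c z = zero) := by
        rw [hZdef]; apply Finset.filter_congr; intro z _
        constructor
        · rintro ⟨h1, h2, h | h | h⟩ <;>
            first | exact absurd h hx0 | exact absurd h hy0 | exact h
        · rintro h
          exact ⟨fun hh => hx0 (hh ▸ h ▸ rfl), fun hh => hy0 (hh ▸ h ▸ rfl),
            Or.inr (Or.inr h)⟩
      rw [this]
      have := hsize zero; simpa [hzero] using this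

/-- For `k ≥ 4` and `n = (2k-3)m`, the blow-up of `J_{k-1}` on `n`
vertices with the universal vertex blown up to a class of size `(k-2)m` and the
other `k-1` vertices to classes of size `m` contains no `K_4^3`, no `F_{3,2}`, and
no `J_k`, and has minimum positive co-degree exactly `(k-2)m = ((k-2)/(2k-3))n`.
Here `c` assigns to each vertex its class among the `k` classes of `J_{k-1}`
(class `0` is the universal class); a triple is an edge iff it meets three distinct
classes, one of which is class `0`. -/
theorem stmt_4 (k m n : ℕ) (hk : 4 ≤ k) (hm : 1 ≤ m) (hn : n = (2 * k - 3) * m)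
    (c : Fin n → Fin k)
    (hsize : ∀ i : Fin k, (Finset.univ.filter (fun v => c v = i)).card =
      if (i : ℕ) = 0 then (k - 2) * m else m)
    (H : Finset (Finset (Fin n)))
    (hH : H = Finset.univ.filter (fun e : Finset (Fin n) =>
      e.card = 3 ∧ (e.image c).card = 3 ∧ (⟨0, by omega⟩ : Fin k) ∈ e.image c)) :
    -- no K_4^3
    (¬ ∃ p q s t : Fin n, ({p, q, s, t} : Finset (Fin n)).card = 4 ∧
      ({p, q, s} : Finset (Fin n)) ∈ H ∧ ({p, q, t} : Finset (Fin n)) ∈ H ∧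
      ({p, s, t} : Finset (Fin n)) ∈ H ∧ ({q, s, t} : Finset (Fin n)) ∈ H) ∧
    -- no F_{3,2}
    (¬ ∃ p q s t u : Fin n, ({p, q, s, t, u} : Finset (Fin n)).card = 5 ∧
      ({p, q, s} : Finset (Fin n)) ∈ H ∧ ({p, q, t} : Finset (Fin n)) ∈ H ∧
      ({p, q, u} : Finset (Fin n)) ∈ H ∧ ({s, t, u} : Finset (Fin n)) ∈ H) ∧
    -- no J_k
    (¬ ∃ v : Fin (k + 1) → Fin n, Function.Injective v ∧
      ∀ i j : Fin (k + 1), 0 < i → i < j → ({v 0, v i, v j} : Finset (Fin n)) ∈ H) ∧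
    -- minimum positive co-degree exactly (k-2) * m
    (∀ x y : Fin n, x ≠ y → (∃ e ∈ H, x ∈ e ∧ y ∈ e) →
      (k - 2) * m ≤ (H.filter (fun e => x ∈ e ∧ y ∈ e)).card) ∧
    (∃ x y : Fin n, x ≠ y ∧ (∃ e ∈ H, x ∈ e ∧ y ∈ e) ∧
      (H.filter (fun e => x ∈ e ∧ y ∈ e)).card = (k - 2) * m) := by
  set zero : Fin k := (⟨0, by omega⟩ : Fin k) with hzero
  have hmemH : ∀ e : Finset (Fin n),
      e ∈ H ↔ e.card = 3 ∧ (e.image c).card = 3 ∧ zero ∈ e.image c := by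
    intro e; rw [hH]; simp [Finset.mem_filter]
  have edge_facts : ∀ a b d : Fin n, ({a, b, d} : Finset (Fin n)) ∈ H →
      (c a ≠ c b ∧ c a ≠ c d ∧ c b ≠ c d) ∧
      (c a = zero ∨ c b = zero ∨ c d = zero) := by
    intro a b d h
    rw [hmemH] at h
    obtain ⟨-, hi, hm0⟩ := h
    simp only [Finset.image_insert, Finset.image_singleton] at hi hm0
    refine ⟨card3_ne hi, ?_⟩
    simp only [Finset.mem_insert, Finset.mem_singleton] at hm0
    rcases hm0 with h | h | h
    · exact Or.inl h.symm
    · exact Or.inr (Or.inl h.symm)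
    · exact Or.inr (Or.inr h.symm)
  refine ⟨?_, ?_, ?_, ?_, ?_⟩
  · -- no K_4^3
    rintro ⟨p, q, s, t, -, h1, h2, h3, h4⟩
    obtain ⟨⟨hpq, hps, hqs⟩, Z1⟩ := edge_facts p q s h1
    obtain ⟨⟨-, hpt, hqt⟩, Z2⟩ := edge_facts p q t h2
    obtain ⟨⟨-, -, hst⟩, Z3⟩ := edge_facts p s t h3
    obtain ⟨-, Z4⟩ := edge_facts q s t h4
    have npq : ¬(c p = zero ∧ c q = zero) := fun ⟨a, b⟩ => hpq (a.trans b.symm)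
    have nps : ¬(c p = zero ∧ c s = zero) := fun ⟨a, b⟩ => hps (a.trans b.symm)
    have nqs : ¬(c q = zero ∧ c s = zero) := fun ⟨a, b⟩ => hqs (a.trans b.symm)
    have npt : ¬(c p = zero ∧ c t = zero) := fun ⟨a, b⟩ => hpt (a.trans b.symm)
    have nqt : ¬(c q = zero ∧ c t = zero) := fun ⟨a, b⟩ => hqt (a.trans b.symm)
    have nst : ¬(c s = zero ∧ c t = zero) := fun ⟨a, b⟩ => hst (a.trans b.symm)
    exact k4_prop npq nps nqs npt nqt nst Z1 Z2 Z3 Z4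
  · -- no F_{3,2}
    rintro ⟨p, q, s, t, u, -, h1, h2, h3, h4⟩
    obtain ⟨⟨hpq, hps, hqs⟩, Z1⟩ := edge_facts p q s h1
    obtain ⟨⟨-, hpt, hqt⟩, Z2⟩ := edge_facts p q t h2
    obtain ⟨⟨-, hpu, hqu⟩, Z3⟩ := edge_facts p q u h3
    obtain ⟨⟨hst, hsu, htu⟩, Z4⟩ := edge_facts s t u h4
    have nps : ¬(c p = zero ∧ c s = zero) := fun ⟨a, b⟩ => hps (a.trans b.symm)
    have nqs : ¬(c q = zero ∧ c s = zero) := fun ⟨a, b⟩ => hqs (a.trans b.symm)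
    have npt : ¬(c p = zero ∧ c t = zero) := fun ⟨a, b⟩ => hpt (a.trans b.symm)
    have nqt : ¬(c q = zero ∧ c t = zero) := fun ⟨a, b⟩ => hqt (a.trans b.symm)
    have npu : ¬(c p = zero ∧ c u = zero) := fun ⟨a, b⟩ => hpu (a.trans b.symm)
    have nqu : ¬(c q = zero ∧ c u = zero) := fun ⟨a, b⟩ => hqu (a.trans b.symm)
    have nst : ¬(c s = zero ∧ c t = zero) := fun ⟨a, b⟩ => hst (a.trans b.symm)
    have nsu : ¬(c s = zero ∧ c u = zero) := fun ⟨a, b⟩ => hsu (a.trans b.symm)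
    have ntu : ¬(c t = zero ∧ c u = zero) := fun ⟨a, b⟩ => htu (a.trans b.symm)
    exact f32_prop nps nqs npt nqt npu nqu nst nsu ntu Z1 Z2 Z3 Z4
  · -- no J_k
    rintro ⟨v, -, hedg⟩
    have key2 : ∀ i j : Fin (k + 1), 0 < i → i < j →
        c (v 0) ≠ c (v i) ∧ c (v 0) ≠ c (v j) ∧ c (v i) ≠ c (v j) :=
      fun i j hi hij => (edge_facts _ _ _ (hedg i j hi hij)).1
    have hlt : ∀ i j : Fin (k + 1), i < j → c (v i) ≠ c (v j) := by
      intro i j hij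
      by_cases h0 : (0 : Fin (k + 1)) < i
      · exact (key2 i j h0 hij).2.2
      · have hi0 : i = 0 := by
          rw [Fin.lt_def] at h0
          exact Fin.ext (by simp only [Fin.val_zero] at h0 ⊢; omega)
        subst hi0
        have hj0 : (0 : ℕ) < (j : ℕ) := by
          rw [Fin.lt_def] at hij; simpa using hij
        by_cases hj : (⟨1, by omega⟩ : Fin (k + 1)) < j
        · exact (key2 ⟨1, by omega⟩ j (by rw [Fin.lt_def]; simp) hj).2.1
        · have hj1 : j = ⟨1, by omega⟩ := by
            rw [Fin.lt_def] at hj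
            exact Fin.ext (by simp only [] at hj ⊢; omega)
          rw [hj1]
          exact (key2 ⟨1, by omega⟩ ⟨2, by omega⟩ (by rw [Fin.lt_def]; simp)
            (by rw [Fin.lt_def]; norm_num)).1
    have hinj : Function.Injective (fun i : Fin (k + 1) => c (v i)) := by
      intro i j hij
      by_contra hne
      rcases lt_or_gt_of_ne hne with h | h
      · exact hlt i j h hij
      · exact hlt j i h hij.symm
    have := Fintype.card_le_of_injective _ hinj
    simp at this
  · -- co-degree lower bound
    intro x y hxy hex
    obtain ⟨e, heH, hxe, hye⟩ := hex
    have hc : c x ≠ c y := by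
      rw [hmemH] at heH
      obtain ⟨hc3, hi3, -⟩ := heH
      have hinj : Set.InjOn c ↑e :=
        Finset.card_image_iff.mp (by rw [hi3, hc3])
      exact fun h => hxy (hinj (Finset.mem_coe.mpr hxe) (Finset.mem_coe.mpr hye) h)
    rw [codeg_key hk hm hn hsize hH x y hc]
  · -- co-degree achieved
    have h01 : zero ≠ (⟨1, by omega⟩ : Fin k) := by simp [hzero, Fin.ext_iff]
    have h02 : zero ≠ (⟨2, by omega⟩ : Fin k) := by simp [hzero, Fin.ext_iff]
    have h12 : (⟨1, by omega⟩ : Fin k) ≠ (⟨2, by omega⟩ : Fin k) := by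
      simp [Fin.ext_iff]
    have h0c : 0 < (Finset.univ.filter (fun v => c v = zero)).card := by
      rw [hsize zero, if_pos (by simp [hzero])]
      exact Nat.mul_pos (by omega) (by omega)
    have h1c : 0 < (Finset.univ.filter (fun v => c v = (⟨1, by omega⟩ : Fin k))).card := by
      rw [hsize _, if_neg (by simp)]; omega
    have h2c : 0 < (Finset.univ.filter (fun v => c v = (⟨2, by omega⟩ : Fin k))).card := by
      rw [hsize _, if_neg (by norm_num)]; omega
    obtain ⟨x, hx⟩ := Finset.card_pos.mp h0c
    obtain ⟨y, hy⟩ := Finset.card_pos.mp h1c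
    obtain ⟨z, hz⟩ := Finset.card_pos.mp h2c
    simp only [Finset.mem_filter, Finset.mem_univ, true_and] at hx hy hz
    have cxy : c x ≠ c y := by rw [hx, hy]; exact h01
    have cxz : c x ≠ c z := by rw [hx, hz]; exact h02
    have cyz : c y ≠ c z := by rw [hy, hz]; exact h12
    have hxy : x ≠ y := fun h => cxy (by rw [h])
    have hxz : x ≠ z := fun h => cxz (by rw [h])
    have hyz : y ≠ z := fun h => cyz (by rw [h])
    have hedge : ({x, y, z} : Finset (Fin n)) ∈ H := by
      rw [hmemH]
      refine ⟨card3_of_ne hxy hxz hyz, ?_, ?_⟩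
      · simp only [Finset.image_insert, Finset.image_singleton]
        exact card3_of_ne cxy cxz cyz
      · simp only [Finset.image_insert, Finset.image_singleton,
          Finset.mem_insert, Finset.mem_singleton]
        exact Or.inl hx.symm
    exact ⟨x, y, hxy, ⟨{x, y, z}, hedge, by simp, by simp⟩,
      codeg_key hk hm hn hsize hH x y cxy⟩
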